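/- Let (X, μ) be a measure space and let R : X → X be a measurable, measure-preserving involution (R ∘ R = id and μ(R⁻¹(S)) = μ(S) for every measurable S). Suppose u, φ : X → ℝ are measurable functions such that the product φ·u is integrable, and u(R x) = -u(x), φ(R x) = -φ(x) for all x ∈ X. Let Ω ⊆ X be a measurable set with μ(Ω ∩ R⁻¹(Ω)) = 0 and μ(X \ (Ω ∪ R⁻¹(Ω))) = 0, and suppose φ(x)·u(x) > 0 for μ-a.e. x ∈ Ω and μ(Ω) > 0. Then ∫_X φ·u dμ = 2 ∫_Ω φ·u dμ > 0; in particular ∫_X φ·u dμ ≠ 0, so u is not L²(μ)-orthogonal to φ. -/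

import Mathlib

open MeasureTheory

/-- Measure-theoretic core of the boundary nodal domain principle (Lemma 3.1):
if `R` is a measurable measure-preserving involution, `u` and `φ` are `R`-anti-invariant
with `φ·u` integrable, and `Ω` is (up to measure zero) a fundamental domain for `R`
on which `φ·u > 0` a.e. with `μ Ω > 0`, then `∫ φ·u = 2 ∫_Ω φ·u > 0`. -/
theorem integral_eq_two_setIntegral_and_pos_of_antiInvariant
    {X : Type*} [MeasurableSpace X] (μ : Measure X) (R : X → X)
    (hRmeas : Measurable R) (hRinv : R ∘ R = id)
    (hRpres : ∀ S : Set X, MeasurableSet S → μ (R ⁻¹' S) = μ S)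
    (u φ : X → ℝ) (humeas : Measurable u) (hφmeas : Measurable φ)
    (hint : Integrable (fun x => φ x * u x) μ)
    (hu : ∀ x, u (R x) = -u x) (hφ : ∀ x, φ (R x) = -φ x)
    (Ω : Set X) (hΩmeas : MeasurableSet Ω)
    (hdisj : μ (Ω ∩ R ⁻¹' Ω) = 0)
    (hcover : μ ((Ω ∪ R ⁻¹' Ω)ᶜ) = 0)
    (hpos : ∀ᵐ x ∂(μ.restrict Ω), 0 < φ x * u x)
    (hΩpos : 0 < μ Ω) :
    (∫ x, φ x * u x ∂μ = 2 * ∫ x in Ω, φ x * u x ∂μ) ∧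
      (0 < ∫ x, φ x * u x ∂μ) ∧ (∫ x, φ x * u x ∂μ ≠ 0) := by
  set f : X → ℝ := fun x => φ x * u x with hf
  have hRR : ∀ x, R (R x) = x := fun x => congrFun hRinv x
  have hfR : ∀ x, f (R x) = f x := by
    intro x; simp [hf, hu, hφ]
  -- R is a measurable equiv
  let e : X ≃ᵐ X :=
    { toFun := R, invFun := R, left_inv := hRR, right_inv := hRR,
      measurable_toFun := hRmeas, measurable_invFun := hRmeas }
  have hmp : MeasurePreserving R μ μ := by
    refine ⟨hRmeas, ?_⟩
    ext S hS
    rw [Measure.map_apply hRmeas hS]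
    exact hRpres S hS
  -- integral over R⁻¹ Ω equals integral over Ω
  have hpre : ∫ x in R ⁻¹' Ω, f x ∂μ = ∫ x in Ω, f x ∂μ := by
    have := MeasurePreserving.setIntegral_preimage_emb hmp
      (MeasurableEquiv.measurableEmbedding e) f Ω
    calc ∫ x in R ⁻¹' Ω, f x ∂μ = ∫ x in R ⁻¹' Ω, f (R x) ∂μ := by
          refine setIntegral_congr_fun (hRmeas hΩmeas) ?_
          intro x _; exact (hfR x).symm
      _ = ∫ x in Ω, f x ∂μ := this
  -- total integral
  have hsplit : ∫ x, f x ∂μ = 2 * ∫ x in Ω, f x ∂μ := by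
    have hU : ∫ x, f x ∂μ = ∫ x in Ω ∪ R ⁻¹' Ω, f x ∂μ := by
      rw [← setIntegral_univ (μ := μ) (f := f)]
      refine setIntegral_congr_set ?_
      rw [Set.union_comm] at hcover ⊢
      exact (ae_eq_univ.2 hcover).symm
    have hUnion : ∫ x in Ω ∪ R ⁻¹' Ω, f x ∂μ
        = ∫ x in Ω, f x ∂μ + ∫ x in R ⁻¹' Ω, f x ∂μ := by
      exact integral_union_ae hdisj (hRmeas hΩmeas).nullMeasurableSet
        hint.integrableOn hint.integrableOn
    rw [hU, hUnion, hpre]; ring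
  -- positivity
  have hposΩ : 0 < ∫ x in Ω, f x ∂μ := by
    have hne : μ.restrict Ω ≠ 0 := by
      simp only [Ne, Measure.restrict_eq_zero]
      exact hΩpos.ne'
    have := (integral_pos_iff_support_of_nonneg_ae
      (μ := μ.restrict Ω) (f := f)
      (hpos.mono fun x hx => hx.le) hint.integrableOn).2 ?_
    · exact this
    · have hsub : ∀ᵐ x ∂(μ.restrict Ω), x ∈ Function.support f :=
        hpos.mono fun x hx => hx.ne'
      have : μ.restrict Ω (Function.support f)ᶜ = 0 := by
        exact ae_iff.1 hsub
      have htot : μ.restrict Ω Set.univ ≤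
          μ.restrict Ω (Function.support f) + μ.restrict Ω (Function.support f)ᶜ := by
        rw [← Set.union_compl_self (Function.support f)]
        exact measure_union_le _ _
      rw [this, add_zero] at htot
      have : 0 < μ.restrict Ω Set.univ := by
        simpa [Measure.restrict_apply_univ] using hΩpos
      exact lt_of_lt_of_le this htot
  refine ⟨hsplit, ?_, ?_⟩
  · rw [hsplit]; linarith
  · rw [hsplit]; positivity
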